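/- Let {v_i}_{i∈V} be vectors in a real inner product space, let ω : V → ℝ≥0 be weights with W := Σ_{i∈V} ω_i > 0, and suppose Σ_{{i,j}∈(V choose 2)} ω_i ω_j ‖v_i − v_j‖² = 1. Fix i_0 ∈ V and let L := B(i_0, 1/(√8·W)) = {j ∈ V : ‖v_{i_0} − v_j‖² ≤ 1/(8W²)}. Then Σ_{j∈V} ω_j · Δ(j, L) ≥ 1/(8W), where Δ(j, L) := min_{i∈L} ‖v_i − v_j‖². -/

import Mathlib

open Finset

/-- if `Σ_{{i,j}} ωᵢωⱼ‖vᵢ−vⱼ‖² = 1` and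
`L = B(i₀, 1/(√8 W)) = {j : ‖v_{i₀} − vⱼ‖² ≤ 1/(8W²)}`, then
`Σⱼ ωⱼ Δ(j, L) ≥ 1/(8W)` where `Δ(j, L) = min_{i∈L} ‖vᵢ − vⱼ‖²`. -/
theorem mass_far_from_ball
    {V : Type*} [Fintype V] [DecidableEq V]
    {F : Type*} [NormedAddCommGroup F] [InnerProductSpace ℝ F]
    (v : V → F) (ω : V → ℝ) (hω : ∀ i, 0 ≤ ω i)
    (W : ℝ) (hW : W = ∑ i, ω i) (hWpos : 0 < W)
    (hsum : (1 / 2) * (∑ i, ∑ j, ω i * ω j * ‖v i - v j‖ ^ 2) = 1)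
    (i₀ : V)
    (L : Finset V)
    (hL : L = Finset.univ.filter (fun j => ‖v i₀ - v j‖ ^ 2 ≤ 1 / (8 * W ^ 2)))
    (hLne : L.Nonempty) :
    1 / (8 * W) ≤ ∑ j, ω j * (L.inf' hLne (fun i => ‖v i - v j‖ ^ 2)) := by
  set Δ : V → ℝ := fun j => L.inf' hLne (fun i => ‖v i - v j‖ ^ 2) with hΔdef
  -- choice of nearest point in L
  have haex : ∀ j : V, ∃ i, i ∈ L ∧ Δ j = ‖v i - v j‖ ^ 2 := fun j =>
    Finset.exists_mem_eq_inf' hLne _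
  choose a haL haeq using haex
  set r : ℝ := Real.sqrt (1 / (8 * W ^ 2)) with hrdef
  have hr0 : 0 ≤ r := Real.sqrt_nonneg _
  have hr2 : r ^ 2 = 1 / (8 * W ^ 2) := Real.sq_sqrt (by positivity)
  -- points of L are within r of v i₀
  have hnear : ∀ i ∈ L, ‖v i₀ - v i‖ ≤ r := by
    intro i hi
    rw [hL, Finset.mem_filter] at hi
    have := Real.sqrt_le_sqrt hi.2
    rwa [Real.sqrt_sq (norm_nonneg _), ← hrdef] at this
  set g : V → ℝ := fun j => Real.sqrt (Δ j) with hgdef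
  have hg0 : ∀ j, 0 ≤ g j := fun j => Real.sqrt_nonneg _
  have hgnorm : ∀ j, g j = ‖v (a j) - v j‖ := by
    intro j
    rw [hgdef]; simp only []
    rw [haeq j, Real.sqrt_sq (norm_nonneg _)]
  have hg2 : ∀ j, g j ^ 2 = Δ j := by
    intro j; rw [hgdef]; exact Real.sq_sqrt (by rw [haeq j]; positivity)
  -- pointwise bound
  have hpt : ∀ i j : V, ‖v i - v j‖ ^ 2 ≤ (g i + g j + 2 * r) ^ 2 := by
    intro i j
    have h1 : ‖v i - v j‖ ≤ g i + g j + 2 * r := by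
      have t1 : ‖v i - v j‖ ≤ ‖v i - v (a i)‖ + ‖v (a i) - v (a j)‖ + ‖v (a j) - v j‖ := by
        calc ‖v i - v j‖ = ‖(v i - v (a i)) + (v (a i) - v (a j)) + (v (a j) - v j)‖ := by
              congr 1; abel
          _ ≤ _ := norm_add₃_le
      have t2 : ‖v (a i) - v (a j)‖ ≤ 2 * r := by
        calc ‖v (a i) - v (a j)‖ = ‖(v (a i) - v i₀) + (v i₀ - v (a j))‖ := by congr 1; abel
          _ ≤ ‖v (a i) - v i₀‖ + ‖v i₀ - v (a j)‖ := norm_add_le _ _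
          _ ≤ r + r := by
              refine add_le_add ?_ (hnear _ (haL j))
              rw [norm_sub_rev]; exact hnear _ (haL i)
          _ = 2 * r := by ring
      have t3 : ‖v i - v (a i)‖ = g i := by rw [norm_sub_rev, hgnorm i]
      have t4 : ‖v (a j) - v j‖ = g j := (hgnorm j).symm
      calc ‖v i - v j‖ ≤ ‖v i - v (a i)‖ + ‖v (a i) - v (a j)‖ + ‖v (a j) - v j‖ := t1
        _ ≤ g i + 2 * r + g j := by rw [t3, t4]; linarith [t2]
        _ = g i + g j + 2 * r := by ring
    have hrhs : 0 ≤ g i + g j + 2 * r := by positivity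
    exact pow_le_pow_left₀ (norm_nonneg _) h1 2
  set S : ℝ := ∑ j, ω j * Δ j with hSdef
  set A : ℝ := ∑ j, ω j * g j with hAdef
  have hA0 : 0 ≤ A := Finset.sum_nonneg fun j _ => mul_nonneg (hω j) (hg0 j)
  have hS0 : 0 ≤ S := Finset.sum_nonneg fun j _ => mul_nonneg (hω j)
    (by rw [← hg2 j]; positivity)
  -- Cauchy–Schwarz : A^2 ≤ W * S
  have hCS : A ^ 2 ≤ W * S := by
    have := Finset.sum_mul_sq_le_sq_mul_sq Finset.univ
      (fun j => Real.sqrt (ω j)) (fun j => Real.sqrt (ω j) * g j)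
    have e1 : ∀ j : V, Real.sqrt (ω j) * (Real.sqrt (ω j) * g j) = ω j * g j := by
      intro j
      rw [← mul_assoc, Real.mul_self_sqrt (hω j)]
    have e2 : ∀ j : V, Real.sqrt (ω j) ^ 2 = ω j := fun j => Real.sq_sqrt (hω j)
    have e3 : ∀ j : V, (Real.sqrt (ω j) * g j) ^ 2 = ω j * Δ j := by
      intro j; rw [mul_pow, e2, hg2]
    calc A ^ 2 = (∑ j, Real.sqrt (ω j) * (Real.sqrt (ω j) * g j)) ^ 2 := by
          rw [hAdef]; congr 1; exact Finset.sum_congr rfl fun j _ => (e1 j).symm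
      _ ≤ (∑ j, Real.sqrt (ω j) ^ 2) * ∑ j, (Real.sqrt (ω j) * g j) ^ 2 := this
      _ = W * S := by
          rw [hW, hSdef]; congr 1
          · exact Finset.sum_congr rfl fun j _ => e2 j
          · exact Finset.sum_congr rfl fun j _ => e3 j
  -- expand the quadratic bound
  have hexp : ∑ i, ∑ j, ω i * ω j * (g i + g j + 2 * r) ^ 2
      = 2 * W * S + (4 * r ^ 2) * W ^ 2 + 2 * A ^ 2 + 8 * r * W * A := by
    have step : ∀ i j : V, ω i * ω j * (g i + g j + 2 * r) ^ 2
        = (ω i * Δ i) * ω j + ω i * (ω j * Δ j) + (4 * r ^ 2) * (ω i * ω j)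
          + 2 * ((ω i * g i) * (ω j * g j)) + (4 * r) * ((ω i * g i) * ω j)
          + (4 * r) * (ω i * (ω j * g j)) := by
      intro i j
      have hi := hg2 i
      have hj := hg2 j
      linear_combination (ω i * ω j) * hi + (ω i * ω j) * hj
    calc ∑ i, ∑ j, ω i * ω j * (g i + g j + 2 * r) ^ 2
        = ∑ i, ∑ j, ((ω i * Δ i) * ω j + ω i * (ω j * Δ j) + (4 * r ^ 2) * (ω i * ω j)
          + 2 * ((ω i * g i) * (ω j * g j)) + (4 * r) * ((ω i * g i) * ω j)
          + (4 * r) * (ω i * (ω j * g j))) :=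
          Finset.sum_congr rfl fun i _ => Finset.sum_congr rfl fun j _ => step i j
      _ = (∑ i, ∑ j, (ω i * Δ i) * ω j) + (∑ i, ∑ j, ω i * (ω j * Δ j))
          + (4 * r ^ 2) * ∑ i, ∑ j, ω i * ω j
          + 2 * ∑ i, ∑ j, (ω i * g i) * (ω j * g j)
          + (4 * r) * ∑ i, ∑ j, (ω i * g i) * ω j
          + (4 * r) * ∑ i, ∑ j, ω i * (ω j * g j) := by
          simp only [Finset.sum_add_distrib, Finset.mul_sum]
      _ = S * W + W * S + (4 * r ^ 2) * (W * W) + 2 * (A * A) + (4 * r) * (A * W)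
          + (4 * r) * (W * A) := by
          rw [← Finset.sum_mul_sum, ← Finset.sum_mul_sum, ← Finset.sum_mul_sum,
            ← Finset.sum_mul_sum, ← Finset.sum_mul_sum, ← Finset.sum_mul_sum,
            ← hSdef, ← hAdef, ← hW]
      _ = _ := by ring
  -- combine
  have hmain : 1 ≤ W * S + (2 * r ^ 2) * W ^ 2 + A ^ 2 + 4 * r * W * A := by
    have hle : ∑ i, ∑ j, ω i * ω j * ‖v i - v j‖ ^ 2
        ≤ ∑ i, ∑ j, ω i * ω j * (g i + g j + 2 * r) ^ 2 := by
      refine Finset.sum_le_sum fun i _ => Finset.sum_le_sum fun j _ => ?_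
      exact mul_le_mul_of_nonneg_left (hpt i j) (mul_nonneg (hω i) (hω j))
    nlinarith [hle, hexp, hsum]
  have hr2W : (r * W) ^ 2 = 1 / 8 := by
    rw [mul_pow, hr2]; field_simp
  have hrW0 : 0 ≤ r * W := mul_nonneg hr0 hWpos.le
  -- final arithmetic: W * S ≥ 1/8
  have hWS : 1 / 8 ≤ W * S := by
    nlinarith [sq_nonneg (A - r * W), hmain, hCS, hr2W, hrW0, hA0,
      mul_nonneg hrW0 hA0]
  rw [div_le_iff₀ (by positivity : (0:ℝ) < 8 * W)]
  nlinarith [hWS]
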